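/- (1D free boundary problem, explicit value.) For a, λ > 0, the infimum I(a,λ) := inf{ ∫_0^a (|u'|^2/2 + λ·χ_{{u≠0}}) dt : u ∈ W^{1,2}(0,a), u(0) = u(a) = 1 } equals min{ λa, 2√(2λ) }. -/

import Mathlib

open MeasureTheory

/-- Admissible class for the 1D free boundary problem: `u ∈ W^{1,2}(0,a)`
(represented by its continuous representative, primitive of `g ∈ L²`),
with boundary values `u(0) = u(a) = 1`. -/
def Adm1D (a : ℝ) (u g : ℝ → ℝ) : Prop :=
  ContinuousOn u (Set.Icc 0 a) ∧
  MemLp g 2 (volume.restrict (Set.Ioo 0 a)) ∧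
  (∀ x ∈ Set.Icc 0 a, u x = 1 + ∫ s in (0:ℝ)..x, g s) ∧
  u 0 = 1 ∧ u a = 1

/-- The cost `∫_0^a |u'|²/2 dt + λ |{u ≠ 0}|`. -/
noncomputable def cost1D (a l : ℝ) (u g : ℝ → ℝ) : ℝ :=
  (∫ s in Set.Ioo 0 a, g s ^ 2 / 2) +
    l * (volume {s | s ∈ Set.Ioo 0 a ∧ u s ≠ 0}).toReal

/-- The value `I(a,λ)` of the 1D free boundary problem. -/
noncomputable def I1D (a l : ℝ) : ℝ :=
  sInf {c | ∃ u g, Adm1D a u g ∧ c = cost1D a l u g}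


open Set


lemma integrableOn_of_bound {f : ℝ → ℝ} {s : Set ℝ} (hs : volume s ≠ ⊤)
    (hm : Measurable f) (C : ℝ) (h : ∀ x, |f x| ≤ C) : IntegrableOn f s := by
  haveI : IsFiniteMeasure (volume.restrict s) :=
    ⟨by rwa [Measure.restrict_apply_univ, lt_top_iff_ne_top]⟩
  exact (memLp_top_of_bound hm.aestronglyMeasurable C
    (ae_of_all _ (by simpa using h))).integrable le_top

lemma memLp2_of_bound {f : ℝ → ℝ} {s : Set ℝ} (hs : volume s ≠ ⊤)
    (hm : Measurable f) (C : ℝ) (h : ∀ x, |f x| ≤ C) :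
    MemLp f 2 (volume.restrict s) := by
  haveI : IsFiniteMeasure (volume.restrict s) :=
    ⟨by rwa [Measure.restrict_apply_univ, lt_top_iff_ne_top]⟩
  exact (memLp_top_of_bound hm.aestronglyMeasurable C
    (ae_of_all _ (by simpa using h))).mono_exponent le_top

lemma key_ineq {g : ℝ → ℝ} {p q l : ℝ} (hl : 0 < l) (hpq : p < q)
    (hint : IntegrableOn g (Ioo p q))
    (hsq : IntegrableOn (fun x => g x ^ 2) (Ioo p q))
    (h1 : 1 ≤ |∫ x in Ioo p q, g x|) :
    Real.sqrt (2 * l) ≤ (∫ x in Ioo p q, g x ^ 2 / 2) + l * (q - p) := by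
  set c := Real.sqrt (2 * l) with hc
  have hc0 : 0 < c := Real.sqrt_pos.2 (by linarith)
  have hc2 : c ^ 2 = 2 * l := Real.sq_sqrt (by linarith)
  have habs : 1 ≤ ∫ x in Ioo p q, |g x| := by
    refine le_trans h1 ?_
    simpa [Real.norm_eq_abs] using norm_integral_le_integral_norm (μ := volume.restrict (Ioo p q)) g
  have hmono : (∫ x in Ioo p q, |g x|) ≤ ∫ x in Ioo p q, (g x ^ 2 / (2 * c) + c / 2) := by
    refine integral_mono hint.abs ?_ ?_
    · exact (hsq.div_const _).add (integrableOn_const (by simp [Real.volume_Ioo]))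
    · intro x
      have hne : (2 * c) ≠ 0 := by positivity
      have key : g x ^ 2 / (2 * c) + c / 2 - |g x| = (|g x| - c) ^ 2 / (2 * c) := by
        field_simp; nlinarith [sq_abs (g x)]
      have hnn : (0:ℝ) ≤ (|g x| - c) ^ 2 / (2 * c) :=
        div_nonneg (sq_nonneg _) (by positivity)
      simp only []
      linarith [key ▸ hnn]
  have hsplit : (∫ x in Ioo p q, (g x ^ 2 / (2 * c) + c / 2)) =
      (∫ x in Ioo p q, g x ^ 2) / (2 * c) + (c / 2) * (q - p) := by
    rw [integral_add (hsq.div_const _) (integrableOn_const (by simp [Real.volume_Ioo]))]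
    rw [integral_div, setIntegral_const, measureReal_def]
    rw [Real.volume_Ioo, ENNReal.toReal_ofReal (by linarith)]
    rw [smul_eq_mul]; ring
  have hhalf : (∫ x in Ioo p q, g x ^ 2 / 2) = (∫ x in Ioo p q, g x ^ 2) / 2 := integral_div _ _
  set A := ∫ x in Ioo p q, g x ^ 2 with hA
  rw [hsplit] at hmono
  have := habs.trans hmono
  rw [hhalf]
  have h2 : c * 1 ≤ c * (A / (2 * c) + c / 2 * (q - p)) := by
    exact mul_le_mul_of_nonneg_left this hc0.le
  have hca : c * (A / (2 * c)) = A / 2 := by field_simp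
  nlinarith [h2]

lemma lower_bound (a l : ℝ) (ha : 0 < a) (hl : 0 < l) {u g : ℝ → ℝ}
    (h : Adm1D a u g) :
    min (l * a) (2 * Real.sqrt (2 * l)) ≤ cost1D a l u g := by
  obtain ⟨hcont, hg2, hu, h0, hA⟩ := h
  have hfin : volume (Ioo (0:ℝ) a) ≠ ⊤ := by simp [Real.volume_Ioo]
  haveI : IsFiniteMeasure (volume.restrict (Ioo (0:ℝ) a)) :=
    ⟨by rwa [Measure.restrict_apply_univ, lt_top_iff_ne_top]⟩
  have hgInt : IntegrableOn g (Ioo 0 a) := hg2.integrable one_le_two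
  have hsqInt : IntegrableOn (fun x => g x ^ 2) (Ioo 0 a) := hg2.integrable_sq
  have hsqhalf : IntegrableOn (fun x => g x ^ 2 / 2) (Ioo 0 a) := hsqInt.div_const _
  have hE0 : 0 ≤ ∫ x in Ioo 0 a, g x ^ 2 / 2 :=
    integral_nonneg fun x => by positivity
  by_cases hz : ∃ t ∈ Ioo (0:ℝ) a, u t = 0
  · -- u vanishes somewhere
    obtain ⟨t₀, ht₀, ht₀0⟩ := hz
    set Z : Set ℝ := Icc 0 a ∩ u ⁻¹' {0} with hZ
    have hZc : IsClosed Z :=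
      hcont.preimage_isClosed_of_isClosed isClosed_Icc isClosed_singleton
    have ht₀Z : t₀ ∈ Z := ⟨⟨ht₀.1.le, ht₀.2.le⟩, ht₀0⟩
    have hZne : Z.Nonempty := ⟨t₀, ht₀Z⟩
    have hZbb : BddBelow Z := ⟨0, fun x hx => hx.1.1⟩
    have hZba : BddAbove Z := ⟨a, fun x hx => hx.1.2⟩
    set s := sInf Z with hs
    set t := sSup Z with ht
    have hsZ : s ∈ Z := hZc.csInf_mem hZne hZbb
    have htZ : t ∈ Z := hZc.csSup_mem hZne hZba
    have hus : u s = 0 := hsZ.2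
    have hut : u t = 0 := htZ.2
    have hst : s ≤ t := le_trans (csInf_le hZbb ht₀Z) (le_csSup hZba ht₀Z)
    have hs0 : 0 < s := by
      rcases lt_or_eq_of_le hsZ.1.1 with h | h
      · exact h
      · exfalso; rw [← h] at hus; rw [h0] at hus; norm_num at hus
    have hta : t < a := by
      rcases lt_or_eq_of_le htZ.1.2 with h | h
      · exact h
      · exfalso; rw [h] at hut; rw [hA] at hut; norm_num at hut
    have hsa : s < a := lt_of_le_of_lt hst hta
    have ht0 : 0 < t := lt_of_lt_of_le hs0 hst
    -- interval integrability of g on subintervals of [0,a]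
    have hII : ∀ p q : ℝ, 0 ≤ p → p ≤ q → q ≤ a → IntervalIntegrable g volume p q := by
      intro p q hp hpq hq
      exact (intervalIntegrable_iff_integrableOn_Ioo_of_le hpq).2
        (hgInt.mono_set (Ioo_subset_Ioo (by linarith) (by linarith)))
    -- interval integral values
    have hFs : (∫ x in (0:ℝ)..s, g x) = -1 := by
      have := hu s ⟨hs0.le, hsa.le⟩
      rw [hus] at this; linarith
    have hFt : (∫ x in (0:ℝ)..t, g x) = -1 := by
      have := hu t ⟨ht0.le, hta.le⟩
      rw [hut] at this; linarith
    have hFa : (∫ x in (0:ℝ)..a, g x) = 0 := by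
      have := hu a ⟨ha.le, le_refl a⟩
      rw [hA] at this; linarith
    have hFta : (∫ x in t..a, g x) = 1 := by
      have hadd := intervalIntegral.integral_add_adjacent_intervals
        (hII 0 t le_rfl ht0.le hta.le) (hII t a ht0.le hta.le le_rfl)
      rw [hFt, hFa] at hadd; linarith
    -- rewrite as set integrals over Ioo
    have hIs : |∫ x in Ioo 0 s, g x| = 1 := by
      rw [← integral_Ioc_eq_integral_Ioo, ← intervalIntegral.integral_of_le hs0.le, hFs]
      norm_num
    have hIt : |∫ x in Ioo t a, g x| = 1 := by
      rw [← integral_Ioc_eq_integral_Ioo, ← intervalIntegral.integral_of_le hta.le, hFta]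
      norm_num
    have hsub1 : Ioo (0:ℝ) s ⊆ Ioo 0 a := Ioo_subset_Ioo le_rfl hsa.le
    have hsub2 : Ioo t a ⊆ Ioo 0 a := Ioo_subset_Ioo ht0.le le_rfl
    have key1 := key_ineq hl hs0 (hgInt.mono_set hsub1) (hsqInt.mono_set hsub1) hIs.ge
    have key2 := key_ineq hl hta (hgInt.mono_set hsub2) (hsqInt.mono_set hsub2) hIt.ge
    -- the nonvanishing set contains Ioo 0 s ∪ Ioo t a
    have hsubset : Ioo 0 s ∪ Ioo t a ⊆ {x | x ∈ Ioo 0 a ∧ u x ≠ 0} := by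
      rintro x (hx | hx)
      · refine ⟨⟨hx.1, lt_trans hx.2 hsa⟩, fun hux => ?_⟩
        have : s ≤ x := csInf_le hZbb ⟨⟨hx.1.le, (lt_trans hx.2 hsa).le⟩, hux⟩
        linarith [hx.2]
      · refine ⟨⟨lt_trans ht0 hx.1, hx.2⟩, fun hux => ?_⟩
        have : x ≤ t := le_csSup hZba ⟨⟨(lt_trans ht0 hx.1).le, hx.2.le⟩, hux⟩
        linarith [hx.1]
    have hd : Disjoint (Ioo (0:ℝ) s) (Ioo t a) := by
      rw [Set.disjoint_left]
      rintro x hx hx'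
      linarith [hx.2, hx'.1]
    -- measure bound
    have hmb : s + (a - t) ≤ (volume {x | x ∈ Ioo 0 a ∧ u x ≠ 0}).toReal := by
      have hU : volume (Ioo 0 s ∪ Ioo t a) = ENNReal.ofReal s + ENNReal.ofReal (a - t) := by
        rw [measure_union hd measurableSet_Ioo, Real.volume_Ioo, Real.volume_Ioo, sub_zero]
      have hmono := measure_mono (μ := volume) hsubset
      have hsetfin : volume {x | x ∈ Ioo 0 a ∧ u x ≠ 0} ≠ ⊤ :=
        ne_top_of_le_ne_top hfin (measure_mono fun x hx => hx.1)
      have := ENNReal.toReal_mono hsetfin hmono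
      rw [hU, ENNReal.toReal_add (by simp) (by simp), ENNReal.toReal_ofReal hs0.le,
        ENNReal.toReal_ofReal (by linarith)] at this
      exact this
    -- energy bound
    have hEb : (∫ x in Ioo 0 s, g x ^ 2 / 2) + (∫ x in Ioo t a, g x ^ 2 / 2) ≤
        ∫ x in Ioo 0 a, g x ^ 2 / 2 := by
      rw [← setIntegral_union hd measurableSet_Ioo (hsqhalf.mono_set hsub1)
        (hsqhalf.mono_set hsub2)]
      refine setIntegral_mono_set hsqhalf (ae_of_all _ fun x => by positivity) ?_
      exact (Set.union_subset hsub1 hsub2).eventuallyLE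
    have hfinal : 2 * Real.sqrt (2 * l) ≤ cost1D a l u g := by
      unfold cost1D
      have hm := mul_le_mul_of_nonneg_left hmb hl.le
      nlinarith [key1, key2, hEb, hm]
    exact le_trans (min_le_right _ _) hfinal
  · -- u never vanishes: the set is all of Ioo 0 a
    push_neg at hz
    have hset : {x | x ∈ Ioo 0 a ∧ u x ≠ 0} = Ioo 0 a := by
      ext x; exact ⟨fun h => h.1, fun hx => ⟨hx, hz x hx⟩⟩
    have : cost1D a l u g = (∫ x in Ioo 0 a, g x ^ 2 / 2) + l * a := by
      unfold cost1D
      rw [hset, Real.volume_Ioo, sub_zero, ENNReal.toReal_ofReal ha.le]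
    rw [this]
    exact le_trans (min_le_left _ _) (by linarith)



lemma adm_const_one (a : ℝ) (ha : 0 < a) :
    Adm1D a (fun _ => 1) (fun _ => 0) := by
  refine ⟨continuousOn_const, ?_, ?_, rfl, rfl⟩
  · exact memLp2_of_bound (by simp [Real.volume_Ioo]) measurable_const 0 (by simp)
  · intro x _; simp

lemma cost_const_one (a l : ℝ) (ha : 0 < a) :
    cost1D a l (fun _ => 1) (fun _ => 0) = l * a := by
  unfold cost1D
  have : {s | s ∈ Ioo (0:ℝ) a ∧ (1:ℝ) ≠ 0} = Ioo 0 a := by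
    ext x; simp
  rw [this, Real.volume_Ioo, sub_zero, ENNReal.toReal_ofReal ha.le]
  simp

lemma upper2 (a l : ℝ) (ha : 0 < a) (hl : 0 < l)
    (hle : 2 * Real.sqrt (2 * l) ≤ l * a) :
    ∃ u g, Adm1D a u g ∧ cost1D a l u g = 2 * Real.sqrt (2 * l) := by
  set c := Real.sqrt (2 * l) with hc
  have hc0 : 0 < c := Real.sqrt_pos.2 (by linarith)
  have hc2 : c ^ 2 = 2 * l := Real.sq_sqrt (by linarith)
  set δ := c⁻¹ with hδ
  have hδ0 : 0 < δ := inv_pos.2 hc0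
  have hcδ : c * δ = 1 := mul_inv_cancel₀ hc0.ne'
  have h2δ : 2 * δ ≤ a := by
    rw [hδ, ← hcδ] at *
    have h4 : 4 ≤ a * c := by nlinarith
    have := mul_le_mul_of_nonneg_right h4 (inv_pos.2 hc0).le
    calc 2 * c⁻¹ ≤ 4 * c⁻¹ := by linarith [inv_pos.2 hc0]
      _ ≤ a * c * c⁻¹ := this
      _ = a := by field_simp
  have hδa : δ ≤ a - δ := by linarith
  set g1 : ℝ → ℝ := (Iio δ).indicator (fun _ => -c) with hg1
  set g2 : ℝ → ℝ := (Ioi (a - δ)).indicator (fun _ => c) with hg2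
  set g : ℝ → ℝ := fun x => g1 x + g2 x with hg
  have hm1 : Measurable g1 := measurable_const.indicator measurableSet_Iio
  have hm2 : Measurable g2 := measurable_const.indicator measurableSet_Ioi
  have hgm : Measurable g := hm1.add hm2
  have hb1 : ∀ x, |g1 x| ≤ c := by
    intro x
    by_cases hx : x ∈ Iio δ <;>
      simp [hg1, Set.indicator_of_mem, Set.indicator_of_notMem, hx, abs_of_nonneg, hc0.le]
  have hb2 : ∀ x, |g2 x| ≤ c := by
    intro x
    by_cases hx : x ∈ Ioi (a - δ) <;>
      simp [hg2, Set.indicator_of_mem, Set.indicator_of_notMem, hx, abs_of_nonneg, hc0.le]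
  have hgb : ∀ x, |g x| ≤ 2 * c := by
    intro x
    calc |g x| ≤ |g1 x| + |g2 x| := abs_add_le _ _
      _ ≤ 2 * c := by linarith [hb1 x, hb2 x]
  have hII : ∀ (f : ℝ → ℝ), Measurable f → (∀ x, |f x| ≤ 2 * c) →
      ∀ p q : ℝ, IntervalIntegrable f volume p q := by
    intro f hf hfb p q
    rcases le_total p q with h | h
    · exact (intervalIntegrable_iff_integrableOn_Ioo_of_le h).2
        (integrableOn_of_bound (by simp [Real.volume_Ioo]) hf (2 * c) hfb)
    · exact ((intervalIntegrable_iff_integrableOn_Ioo_of_le h).2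
        (integrableOn_of_bound (by simp [Real.volume_Ioo]) hf (2 * c) hfb)).symm
  have hII1 := hII g1 hm1 (fun x => le_trans (hb1 x) (by linarith))
  have hII2 := hII g2 hm2 (fun x => le_trans (hb2 x) (by linarith))
  have hIIg := hII g hgm hgb
  -- primitive values
  have hT1 : ∀ x ∈ Icc 0 a, (∫ s in (0:ℝ)..x, g1 s) = -c * min x δ := by
    intro x hx
    rw [intervalIntegral.integral_of_le hx.1, integral_Ioc_eq_integral_Ioo, hg1,
      setIntegral_indicator measurableSet_Iio, Ioo_inter_Iio, setIntegral_const, measureReal_def,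
      Real.volume_Ioo, sub_zero, ENNReal.toReal_ofReal (le_min hx.1 hδ0.le), smul_eq_mul]
    ring_nf
  have hT2 : ∀ x ∈ Icc 0 a, (∫ s in (0:ℝ)..x, g2 s) = c * max (x - (a - δ)) 0 := by
    intro x hx
    rw [intervalIntegral.integral_of_le hx.1, integral_Ioc_eq_integral_Ioo, hg2,
      setIntegral_indicator measurableSet_Ioi, Ioo_inter_Ioi, setIntegral_const, smul_eq_mul]
    have hmax : (0:ℝ) ⊔ (a - δ) = a - δ := max_eq_right (by linarith)
    rw [hmax, measureReal_def, Real.volume_Ioo]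
    rcases le_total x (a - δ) with h | h
    · rw [ENNReal.ofReal_of_nonpos (by linarith), max_eq_right (by linarith)]
      simp
    · rw [ENNReal.toReal_ofReal (by linarith), max_eq_left (by linarith)]
      ring
  have hF : ∀ x ∈ Icc 0 a, (∫ s in (0:ℝ)..x, g s) =
      -c * min x δ + c * max (x - (a - δ)) 0 := by
    intro x hx
    have : (∫ s in (0:ℝ)..x, g s) = (∫ s in (0:ℝ)..x, g1 s) + ∫ s in (0:ℝ)..x, g2 s := by
      rw [hg]
      exact intervalIntegral.integral_add (hII1 0 x) (hII2 0 x)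
    rw [this, hT1 x hx, hT2 x hx]
  set u : ℝ → ℝ := fun x => 1 + ∫ s in (0:ℝ)..x, g s with hudef
  have hu0 : u 0 = 1 := by simp [hudef]
  have hua : u a = 1 := by
    have := hF a ⟨ha.le, le_rfl⟩
    rw [hudef]
    simp only []
    rw [this, min_eq_right (by linarith), max_eq_left (by linarith)]
    ring_nf
  have hadm : Adm1D a u g := by
    refine ⟨?_, ?_, fun x _ => rfl, hu0, hua⟩
    · exact (continuous_const.add
        (intervalIntegral.continuous_primitive hIIg 0)).continuousOn
    · exact memLp2_of_bound (by simp [Real.volume_Ioo]) hgm (2 * c) hgb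
  -- value of u inside
  have huval : ∀ x ∈ Icc 0 a, u x = 1 - c * min x δ + c * max (x - (a - δ)) 0 := by
    intro x hx
    rw [hudef]; simp only []
    rw [hF x hx]; ring
  -- the nonvanishing set
  have hset : {x | x ∈ Ioo 0 a ∧ u x ≠ 0} = Ioo 0 δ ∪ Ioo (a - δ) a := by
    ext x
    simp only [Set.mem_setOf_eq, Set.mem_union, Set.mem_Ioo]
    constructor
    · rintro ⟨⟨hx0, hxa⟩, hux⟩
      by_contra hcon
      push_neg at hcon
      have h1 : δ ≤ x := hcon.1 hx0
      have h2 : x ≤ a - δ := by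
        by_contra h; push_neg at h; linarith [hcon.2 h]
      have := huval x ⟨hx0.le, hxa.le⟩
      rw [min_eq_right h1, max_eq_right (by linarith)] at this
      apply hux
      rw [this, hcδ]; ring
    · rintro (⟨hx0, hxδ⟩ | ⟨hx1, hxa⟩)
      · have hxa : x < a := by linarith
        refine ⟨⟨hx0, hxa⟩, ?_⟩
        have := huval x ⟨hx0.le, hxa.le⟩
        rw [min_eq_left hxδ.le, max_eq_right (by linarith)] at this
        have hcx : c * x < 1 := by
          calc c * x < c * δ := by exact mul_lt_mul_of_pos_left hxδ hc0
            _ = 1 := hcδ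
        rw [this]
        intro hzero
        nlinarith
      · have hx0 : 0 < x := by linarith
        refine ⟨⟨hx0, hxa⟩, ?_⟩
        have := huval x ⟨hx0.le, hxa.le⟩
        rw [min_eq_right (by linarith), max_eq_left (by linarith)] at this
        rw [this, hcδ]
        intro hzero
        have : c * (x - (a - δ)) > 0 := mul_pos hc0 (by linarith)
        linarith
  -- measure of the set
  have hdisj : Disjoint (Ioo (0:ℝ) δ) (Ioo (a - δ) a) := by
    rw [Set.disjoint_left]
    rintro x hx hx'
    linarith [hx.2, hx'.1]
  have hmeas : (volume {x | x ∈ Ioo 0 a ∧ u x ≠ 0}).toReal = 2 * δ := by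
    rw [hset, measure_union hdisj measurableSet_Ioo, Real.volume_Ioo, Real.volume_Ioo,
      sub_zero, ENNReal.toReal_add (by simp) (by simp), ENNReal.toReal_ofReal hδ0.le,
      ENNReal.toReal_ofReal (by linarith)]
    ring
  -- energy
  have hpart : Ioo (0:ℝ) a = Ioo 0 δ ∪ (Icc δ (a - δ) ∪ Ioo (a - δ) a) := by
    ext x
    simp only [Set.mem_Ioo, Set.mem_union, Set.mem_Icc]
    constructor
    · rintro ⟨hx0, hxa⟩
      rcases lt_or_ge x δ with h | h
      · exact Or.inl ⟨hx0, h⟩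
      · rcases le_or_gt x (a - δ) with h' | h'
        · exact Or.inr (Or.inl ⟨h, h'⟩)
        · exact Or.inr (Or.inr ⟨h', hxa⟩)
    · rintro (⟨h1, h2⟩ | ⟨h1, h2⟩ | ⟨h1, h2⟩) <;> constructor <;> linarith
  have hsqm : Measurable (fun x => g x ^ 2 / 2) := (hgm.pow_const 2).div_const 2
  have hsqb : ∀ x, |g x ^ 2 / 2| ≤ (2 * c) ^ 2 / 2 := by
    intro x
    rw [abs_of_nonneg (by positivity)]
    have h := mul_self_le_mul_self (abs_nonneg (g x)) (hgb x)
    rw [abs_mul_abs_self] at h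
    calc g x ^ 2 / 2 = g x * g x / 2 := by ring
      _ ≤ 2 * c * (2 * c) / 2 := (div_le_div_iff_of_pos_right (by norm_num : (0:ℝ) < 2)).2 h
      _ = (2 * c) ^ 2 / 2 := by ring
  have hpieceInt : ∀ S : Set ℝ, S ⊆ Ioo 0 a → IntegrableOn (fun x => g x ^ 2 / 2) S := by
    intro S hS
    exact (integrableOn_of_bound (by simp [Real.volume_Ioo]) hsqm ((2 * c) ^ 2 / 2) hsqb).mono_set hS
  have hd2 : Disjoint (Icc δ (a - δ)) (Ioo (a - δ) a) := by
    rw [Set.disjoint_left]; rintro x hx hx'; linarith [hx.2, hx'.1]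
  have hd1 : Disjoint (Ioo (0:ℝ) δ) (Icc δ (a - δ) ∪ Ioo (a - δ) a) := by
    rw [Set.disjoint_left]
    rintro x hx (hx' | hx') <;> linarith [hx.2, hx'.1]
  have hS1 : Ioo (0:ℝ) δ ⊆ Ioo 0 a := Ioo_subset_Ioo le_rfl (by linarith)
  have hS2 : Icc δ (a - δ) ⊆ Ioo 0 a := fun x hx => ⟨by linarith [hx.1], by linarith [hx.2]⟩
  have hS3 : Ioo (a - δ) a ⊆ Ioo 0 a := Ioo_subset_Ioo (by linarith) le_rfl
  have hE1 : (∫ x in Ioo 0 δ, g x ^ 2 / 2) = δ * (c ^ 2 / 2) := by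
    rw [setIntegral_congr_fun measurableSet_Ioo
      (g := fun _ => c ^ 2 / 2) ?_, setIntegral_const, measureReal_def, Real.volume_Ioo, sub_zero,
      ENNReal.toReal_ofReal hδ0.le, smul_eq_mul]
    intro x hx
    have hgx : g x = -c := by
      rw [hg]; simp only []
      rw [hg1, hg2, Set.indicator_of_mem (by exact hx.2 : x ∈ Iio δ),
        Set.indicator_of_notMem (by simp only [Set.mem_Ioi, not_lt]; linarith [hx.2])]
      ring
    simp [hgx]
  have hE2 : (∫ x in Icc δ (a - δ), g x ^ 2 / 2) = 0 := by
    rw [setIntegral_congr_fun measurableSet_Icc (g := fun _ => (0:ℝ)) ?_]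
    · simp
    · intro x hx
      have hgx : g x = 0 := by
        rw [hg]; simp only []
        rw [hg1, hg2, Set.indicator_of_notMem (by simp only [Set.mem_Iio, not_lt]; exact hx.1),
          Set.indicator_of_notMem (by simp only [Set.mem_Ioi, not_lt]; exact hx.2)]
        ring
      simp [hgx]
  have hE3 : (∫ x in Ioo (a - δ) a, g x ^ 2 / 2) = δ * (c ^ 2 / 2) := by
    rw [setIntegral_congr_fun measurableSet_Ioo
      (g := fun _ => c ^ 2 / 2) ?_, setIntegral_const, measureReal_def, Real.volume_Ioo,
      ENNReal.toReal_ofReal (by linarith), smul_eq_mul]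
    · ring
    intro x hx
    have hgx : g x = c := by
      rw [hg]; simp only []
      rw [hg1, hg2, Set.indicator_of_notMem (by simp only [Set.mem_Iio, not_lt]; linarith [hx.1]),
        Set.indicator_of_mem (by exact hx.1 : x ∈ Ioi (a - δ))]
      ring
    simp [hgx]
  have hEnergy : (∫ x in Ioo 0 a, g x ^ 2 / 2) = 2 * δ * (c ^ 2 / 2) := by
    rw [hpart, setIntegral_union hd1 (measurableSet_Icc.union measurableSet_Ioo)
      (hpieceInt _ hS1) ((hpieceInt _ hS2).union (hpieceInt _ hS3)),
      setIntegral_union hd2 measurableSet_Ioo (hpieceInt _ hS2) (hpieceInt _ hS3),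
      hE1, hE2, hE3]
    ring
  refine ⟨u, g, hadm, ?_⟩
  unfold cost1D
  rw [hEnergy, hmeas]
  have : c ^ 2 / 2 = l := by nlinarith
  rw [this]
  have hlδ : l * δ = c / 2 := by
    have : c * c = 2 * l := by nlinarith
    field_simp [hδ]
    nlinarith [this, hc2]
  linarith [hlδ]


/-- Explicit value of the 1D free boundary problem:
`I(a,λ) = min { λa , 2√(2λ) }`. -/
theorem stmt13 (a l : ℝ) (ha : 0 < a) (hl : 0 < l) :
    I1D a l = min (l * a) (2 * Real.sqrt (2 * l)) := by
  unfold I1D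
  set S := {c | ∃ u g, Adm1D a u g ∧ c = cost1D a l u g} with hS
  have hmem1 : (l * a) ∈ S :=
    ⟨_, _, adm_const_one a ha, (cost_const_one a l ha).symm⟩
  have hbdd : BddBelow S := by
    refine ⟨min (l * a) (2 * Real.sqrt (2 * l)), ?_⟩
    rintro c ⟨u, g, hadm, rfl⟩
    exact lower_bound a l ha hl hadm
  apply le_antisymm
  · rcases le_total (l * a) (2 * Real.sqrt (2 * l)) with h | h
    · rw [min_eq_left h]
      exact csInf_le hbdd hmem1
    · rw [min_eq_right h]
      obtain ⟨u, g, hadm, hcost⟩ := upper2 a l ha hl h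
      exact csInf_le hbdd ⟨u, g, hadm, hcost.symm⟩
  · refine le_csInf ⟨_, hmem1⟩ ?_
    rintro c ⟨u, g, hadm, rfl⟩
    exact lower_bound a l ha hl hadm
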